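/- Let 1/3 ≤ p < 1/2. Then the matrix C₁C₂ has three distinct real eigenvalues, namely p², λ₋ = p(2 − 3p − √((4−7p)p))/2 and λ₊ = p(2 − 3p + √((4−7p)p))/2, and they satisfy 0 < λ₋ < p² < λ₊; equivalently, the characteristic polynomial of C₁C₂ factors as (X − p²)(X − λ₋)(X − λ₊). -/

import Mathlib

open Matrix MeasureTheory Filter
open scoped ENNReal

noncomputable section

abbrev E3 : Type := EuclideanSpace ℝ (Fin 3)
abbrev Mat3 : Type := Matrix (Fin 3) (Fin 3) ℝ

/-- The action of a matrix on Euclidean 3-space. -/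
noncomputable def matApply (A : Mat3) (x : E3) : E3 := Matrix.toEuclideanCLM (𝕜 := ℝ) A x

/-- The largest singular value `α₁(A) = ‖A‖` (Euclidean operator norm). -/
noncomputable def sv1 (A : Mat3) : ℝ := ‖Matrix.toEuclideanCLM (𝕜 := ℝ) A‖

/-- The smallest singular value `α₃(A) = ‖A⁻¹‖⁻¹`. -/
noncomputable def sv3 (A : Mat3) : ℝ := (‖Matrix.toEuclideanCLM (𝕜 := ℝ) A⁻¹‖)⁻¹

/-- The middle singular value `α₂(A) = |det A| / (α₁(A) α₃(A))`. -/
noncomputable def sv2 (A : Mat3) : ℝ := |A.det| / (sv1 A * sv3 A)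

/-- Falconer's singular value function `φ^s(A)`. -/
noncomputable def svf (s : ℝ) (A : Mat3) : ℝ :=
  if s ≤ 1 then (sv1 A) ^ s
  else if s ≤ 2 then sv1 A * (sv2 A) ^ (s - 1)
  else if s ≤ 3 then sv1 A * sv2 A * (sv3 A) ^ (s - 2)
  else (sv1 A * sv2 A * sv3 A) ^ (s / 3)

/-- The three matrices `C₁, C₂, C₃` (with 0-based indexing). -/
def Cmat (p : ℝ) : Fin 3 → Mat3 :=
  ![!![1 - 2*p, -p, -p; 0, p, 0; 0, 0, p],
    !![p, 0, 0; -p, 1 - 2*p, -p; 0, 0, p],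
    !![p, 0, 0; 0, p, 0; -p, -p, 1 - 2*p]]

/-- The product `C_w = C_{j₁} ⋯ C_{jₙ}` along a word `w = (j₁, …, jₙ)`. -/
noncomputable def Cword (p : ℝ) {n : ℕ} (w : Fin n → Fin 3) : Mat3 :=
  ((List.ofFn w).map (Cmat p)).prod

/-- standard basis vectors of `E3` -/
noncomputable def eVec (i : Fin 3) : E3 := EuclideanSpace.single i 1

/-- The affine map `G_i(x) = C_i x + 2p·e_i`. -/
noncomputable def Gmap (p : ℝ) (i : Fin 3) (x : E3) : E3 :=
  matApply (Cmat p i) x + (2 * p) • eVec i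

/-- The composition `G_w = G_{j₁} ∘ ⋯ ∘ G_{jₙ}` along a word `w = (j₁, …, jₙ)`. -/
noncomputable def Gword (p : ℝ) {n : ℕ} (w : Fin n → Fin 3) : E3 → E3 :=
  ((List.ofFn w).map (Gmap p)).foldr (· ∘ ·) id

/-- Summability of the double series `Σ_{n=1}^∞ Σ_{w ∈ {1,2,3}ⁿ} φ^s(C_w)`
(all terms are nonnegative, so summability is equivalent to finiteness of the sum). -/
def seriesSummable (p s : ℝ) : Prop :=
  Summable (fun x : Σ n : ℕ, (Fin (n+1) → Fin 3) => svf s (Cword p x.2))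

/-- The affinity dimension `s₀ = inf{s > 0 : Σ_n Σ_w φ^s(C_w) < ∞}`. -/
noncomputable def s0 (p : ℝ) : ℝ := sInf {s : ℝ | 0 < s ∧ seriesSummable p s}

/-- The minimal number of balls of radius `δ` needed to cover `A`. -/
noncomputable def coverNum (A : Set E3) (δ : ℝ) : ℕ :=
  sInf {n : ℕ | ∃ t : Finset E3, t.card = n ∧ A ⊆ ⋃ x ∈ t, Metric.ball x δ}

/-- The upper box-counting dimension `limsup_{δ→0⁺} log N_δ(A) / (−log δ)`. -/
noncomputable def upperBoxDim (A : Set E3) : ℝ :=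
  Filter.limsup (fun δ : ℝ => Real.log (coverNum A δ) / (-Real.log δ))
    (nhdsWithin 0 (Set.Ioi 0))

/-- The vector `(1,1,1)`. -/
noncomputable def onesVec : E3 := (WithLp.equiv 2 (Fin 3 → ℝ)).symm ![1, 1, 1]

/-- Orthogonal projection of `ℝ³` onto the plane `V = {x : x₁ + x₂ + x₃ = 0}`. -/
noncomputable def projV (x : E3) : E3 := x - (((x 0) + (x 1) + (x 2)) / 3) • onesVec

/-- The vector `(a,b,c)` in `E3`. -/
noncomputable def vec3 (a b c : ℝ) : E3 := (WithLp.equiv 2 (Fin 3 → ℝ)).symm ![a, b, c]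

/-- The triangle `T₀ = conv{e₁, e₂, e₃}`. -/
noncomputable def T0set : Set E3 := convexHull ℝ {eVec 0, eVec 1, eVec 2}

/-- The standard tetrahedron `W = conv{0, e₁, e₂, e₃}`. -/
noncomputable def Wset : Set E3 := convexHull ℝ {0, eVec 0, eVec 1, eVec 2}

/-- The triangle `T_ε = conv{(1−2ε,ε,ε), (ε,1−2ε,ε), (ε,ε,1−2ε)}`. -/
noncomputable def Ttri (ε : ℝ) : Set E3 :=
  convexHull ℝ {vec3 (1 - 2*ε) ε ε, vec3 ε (1 - 2*ε) ε, vec3 ε ε (1 - 2*ε)}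

set_option maxHeartbeats 1000000 in
/-- Lemma (explicit eigenvalues of `C₁C₂` for `1/3 ≤ p < 1/2`). -/
theorem eigenvalues_C1C2 (p : ℝ) (hp13 : 1/3 ≤ p) (hp12 : p < 1/2) :
    0 < p * (2 - 3*p - Real.sqrt ((4 - 7*p) * p)) / 2 ∧
    p * (2 - 3*p - Real.sqrt ((4 - 7*p) * p)) / 2 < p^2 ∧
    p^2 < p * (2 - 3*p + Real.sqrt ((4 - 7*p) * p)) / 2 ∧
    (Cmat p 0 * Cmat p 1).charpoly =
      (Polynomial.X - Polynomial.C (p^2)) *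
      (Polynomial.X - Polynomial.C (p * (2 - 3*p - Real.sqrt ((4 - 7*p) * p)) / 2)) *
      (Polynomial.X - Polynomial.C (p * (2 - 3*p + Real.sqrt ((4 - 7*p) * p)) / 2)) := by

  have hp0 : 0 < p := lt_of_lt_of_le (by norm_num) hp13
  set s := Real.sqrt ((4 - 7*p) * p) with hsdef
  have hnn : 0 ≤ (4 - 7*p) * p := by nlinarith
  have hs2 : s^2 = (4 - 7*p) * p := Real.sq_sqrt hnn
  have hs0 : 0 ≤ s := Real.sqrt_nonneg _
  have h1 : s < 2 - 3*p := by
    have h23 : 0 < 2 - 3*p := by nlinarith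
    nlinarith [sq_nonneg (s - (2 - 3*p)), sq_nonneg (2 - 4*p)]
  have h2 : 2 - 5*p < s := by
    nlinarith [sq_nonneg (s + (2 - 5*p)), sq_nonneg (s - (5*p - 2))]
  refine ⟨by nlinarith, by nlinarith, by nlinarith, ?_⟩
  have hC : (Cmat p 0 * Cmat p 1) =
      !![p - p^2, -((1-2*p)*p), 0; -(p^2), (1-2*p)*p, -(p^2); 0, 0, p^2] := by
    simp [Cmat]
    refine ⟨⟨?_, ?_⟩, ⟨?_, ?_, ?_⟩, ?_⟩ <;> ring
  rw [hC, Matrix.charpoly]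
  have : charmatrix !![p - p^2, -((1-2*p)*p), 0; -(p^2), (1-2*p)*p, -(p^2); 0, 0, p^2] =
      !![Polynomial.X - Polynomial.C (p - p^2), Polynomial.C ((1-2*p)*p), 0;
         Polynomial.C (p^2), Polynomial.X - Polynomial.C ((1-2*p)*p), Polynomial.C (p^2);
         0, 0, Polynomial.X - Polynomial.C (p^2)] := by
    ext i j
    fin_cases i <;> fin_cases j <;>
      simp [charmatrix_apply, Matrix.one_apply, Polynomial.X]
  rw [this]
  rw [Matrix.det_fin_three]
  norm_num [Matrix.of_apply]
  simp only [Matrix.cons_val]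
  have key : ((p * (2 - 3*p - s) / 2) + (p * (2 - 3*p + s) / 2) = 2*p - 3*p^2) ∧
      ((p * (2 - 3*p - s) / 2) * (p * (2 - 3*p + s) / 2) = p^2*(1-2*p)^2) := by
    constructor
    · ring
    · nlinarith [hs2]
  obtain ⟨k1, k2⟩ := key
  have expand : ∀ a b c : ℝ,
      (Polynomial.X - Polynomial.C a) * (Polynomial.X - Polynomial.C b) *
        (Polynomial.X - Polynomial.C c) =
      Polynomial.X^3 - Polynomial.C (a + b + c) * Polynomial.X^2 +
        Polynomial.C (a*b + a*c + b*c) * Polynomial.X - Polynomial.C (a*b*c) := by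
    intro a b c
    simp only [mul_sub, sub_mul, map_add, _root_.map_mul, map_sub]
    ring
  rw [show Polynomial.C p ^ 2 = Polynomial.C (p^2) from (map_pow Polynomial.C p 2).symm]
  rw [expand (p^2) (p * (2 - 3*p - s) / 2) (p * (2 - 3*p + s) / 2)]
  have e1 : p^2 + p * (2 - 3*p - s) / 2 + p * (2 - 3*p + s) / 2 = p^2 + (2*p - 3*p^2) := by
    linarith [k1]
  have e2 : p^2 * (p * (2 - 3*p - s) / 2) + p^2 * (p * (2 - 3*p + s) / 2) +
      p * (2 - 3*p - s) / 2 * (p * (2 - 3*p + s) / 2)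
      = p^2 * (2*p - 3*p^2) + p^2*(1-2*p)^2 := by linear_combination p^2 * k1 + k2
  have e3 : p^2 * (p * (2 - 3*p - s) / 2) * (p * (2 - 3*p + s) / 2) = p^2 * (p^2*(1-2*p)^2) := by
    linear_combination p^2 * k2
  rw [e1, e2, e3]
  simp only [map_add, _root_.map_mul, map_sub, map_pow, map_ofNat, Polynomial.C_1]
  ring
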